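/- Let R be a p × p correlation matrix whose entries are R_{ij} = ρ(|i − j|) for a function ρ: [0,∞) → [0,1] satisfying ρ(t) ≤ c·t^{−γ} for all t ≥ 1 and some constants c > 0, γ > 0. Then for any k ≤ p, the k × k leading principal submatrix R(k) satisfies ‖R(k)‖_F² ≤ C·k^{2−min(γ,1)/2} for a constant C depending only on c and γ. In particular, for the autoregressive case ρ(t) = r^t with fixed r ∈ (0,1), one has ‖R(k)‖_F² ≤ C·k. -/

import Mathlib

open Finset Real

theorem stmt7 (c γ : ℝ) (hc : 0 < c) (hγ : 0 < γ) :
    (∃ C > 0, ∀ ρ : ℝ → ℝ, ρ 0 = 1 → (∀ t : ℝ, 0 ≤ t → 0 ≤ ρ t ∧ ρ t ≤ 1) →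
      (∀ t : ℝ, 1 ≤ t → ρ t ≤ c * t ^ (-γ)) →
      ∀ p k : ℕ, k ≤ p →
        ∑ i : Fin k, ∑ j : Fin k, (ρ |(i : ℝ) - (j : ℝ)|) ^ 2 ≤
          C * (k : ℝ) ^ (2 - min γ 1 / 2)) ∧
    (∀ r : ℝ, 0 < r → r < 1 → ∃ C > 0, ∀ p k : ℕ, k ≤ p →
      ∑ i : Fin k, ∑ j : Fin k, (r ^ |(i : ℝ) - (j : ℝ)|) ^ 2 ≤ C * (k : ℝ)) := by
  constructor
  · refine ⟨max c 1 + 3, by positivity, ?_⟩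
    intro ρ hρ0 hρ h3 p k hk
    set α := min γ 1 with hαdef
    have hα0 : 0 < α := lt_min hγ one_pos
    have hα1 : α ≤ 1 := min_le_right _ _
    have hαγ : α ≤ γ := min_le_left _ _
    rcases Nat.eq_zero_or_pos k with rfl | hk1
    · have he : (2 - α / 2) ≠ 0 := by intro h; linarith [h, hα1]
      simp [Real.zero_rpow he]
    · have hK1 : (1:ℝ) ≤ (k:ℝ) := by exact_mod_cast hk1
      set K := (k:ℝ) with hKdef
      have hK0 : (0:ℝ) < K := by linarith
      set s := Real.sqrt K with hsdef
      have hs1 : (1:ℝ) ≤ s := by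
        rw [hsdef, show (1:ℝ) = Real.sqrt 1 by simp]
        exact Real.sqrt_le_sqrt hK1
      have hs0 : (0:ℝ) < s := by linarith
      have hC0 : (0:ℝ) < max c 1 := lt_of_lt_of_le one_pos (le_max_right _ _)
      -- per-term bound
      have key : ∀ i j : Fin k, (ρ |(i:ℝ) - (j:ℝ)|)^2 ≤
          (if |(i:ℝ) - (j:ℝ)| ≤ s then (1:ℝ) else 0) + max c 1 * K ^ (-(α/2)) := by
        intro i j
        set t := |(i:ℝ) - (j:ℝ)| with htdef
        have ht0 : 0 ≤ t := abs_nonneg _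
        obtain ⟨h0, h1⟩ := hρ t ht0
        have hKpow : (0:ℝ) ≤ max c 1 * K ^ (-(α/2)) :=
          mul_nonneg hC0.le (Real.rpow_nonneg hK0.le _)
        by_cases hts : t ≤ s
        · rw [if_pos hts]
          have : (ρ t)^2 ≤ 1 := by nlinarith
          linarith
        · rw [if_neg hts]
          push_neg at hts
          have ht1 : 1 ≤ t := le_trans hs1 hts.le
          have e1 : ρ t ≤ c * t ^ (-γ) := h3 t ht1
          have e2 : (ρ t)^2 ≤ ρ t := by nlinarith
          have e3 : t ^ (-γ) ≤ t ^ (-α) :=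
            Real.rpow_le_rpow_of_exponent_le ht1 (by linarith)
          have e4 : t ^ (-α) ≤ s ^ (-α) :=
            Real.rpow_le_rpow_of_nonpos hs0 hts.le (by linarith)
          have e5 : s ^ (-α) = K ^ (-(α/2)) := by
            rw [hsdef, Real.sqrt_eq_rpow, ← Real.rpow_mul hK0.le]
            congr 1
            ring
          have e6 : c * t ^ (-γ) ≤ max c 1 * K ^ (-(α/2)) := by
            have h7 : t ^ (-γ) ≤ K ^ (-(α/2)) := by rw [← e5]; linarith
            have h8 : (0:ℝ) ≤ t ^ (-γ) := Real.rpow_nonneg (by linarith) _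
            have := le_max_left c 1
            nlinarith [Real.rpow_nonneg hK0.le (-(α/2))]
          linarith
      -- count bound
      have hcard : ∀ i : Fin k,
          (((univ : Finset (Fin k)).filter fun j : Fin k => |(i:ℝ) - (j:ℝ)| ≤ s).card : ℝ) ≤ 2*s + 1 := by
        intro i
        have hfl0 : (0:ℤ) ≤ ⌊s⌋ := Int.floor_nonneg.mpr hs0.le
        have hsub : ((univ : Finset (Fin k)).filter fun j : Fin k => |(i:ℝ) - (j:ℝ)| ≤ s).card ≤
            (Finset.Icc ((i:ℤ) - ⌊s⌋) ((i:ℤ) + ⌊s⌋)).card := by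
          apply Finset.card_le_card_of_injOn (fun j : Fin k => ((j : ℕ) : ℤ))
          · intro j hj
            simp only [Finset.coe_filter, Set.mem_setOf_eq, Finset.mem_univ, true_and] at hj
            have habs : |(i:ℤ) - (j:ℤ)| ≤ ⌊s⌋ := by
              rw [Int.le_floor]
              push_cast
              exact le_trans (le_of_eq (by ring_nf)) hj
            rw [Finset.mem_coe, Finset.mem_Icc]
            rw [abs_le] at habs
            constructor <;> linarith [habs.1, habs.2]
          · intro a _ b _ h
            have h' : ((a : ℕ) : ℤ) = ((b : ℕ) : ℤ) := h
            exact Fin.ext (by exact_mod_cast h')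
        have hicc : ((Finset.Icc ((i:ℤ) - ⌊s⌋) ((i:ℤ) + ⌊s⌋)).card : ℝ) ≤ 2*s + 1 := by
          rw [Int.card_Icc]
          have hx : (0:ℤ) ≤ (i:ℤ) + ⌊s⌋ + 1 - ((i:ℤ) - ⌊s⌋) := by linarith
          have h1 : ((((i:ℤ) + ⌊s⌋ + 1 - ((i:ℤ) - ⌊s⌋)).toNat : ℕ) : ℝ)
              = (((i:ℤ) + ⌊s⌋ + 1 - ((i:ℤ) - ⌊s⌋) : ℤ) : ℝ) := by
            rw [← Int.cast_natCast, Int.toNat_of_nonneg hx]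
          rw [h1]
          push_cast
          have := Int.floor_le s
          linarith
        calc (((univ : Finset (Fin k)).filter fun j : Fin k => |(i:ℝ) - (j:ℝ)| ≤ s).card : ℝ)
            ≤ ((Finset.Icc ((i:ℤ) - ⌊s⌋) ((i:ℤ) + ⌊s⌋)).card : ℝ) := by exact_mod_cast hsub
          _ ≤ 2*s + 1 := hicc
      -- combine
      have step1 : ∑ i : Fin k, ∑ j : Fin k, (ρ |(i:ℝ) - (j:ℝ)|)^2 ≤
          ∑ i : Fin k, ∑ j : Fin k,
            ((if |(i:ℝ) - (j:ℝ)| ≤ s then (1:ℝ) else 0) + max c 1 * K ^ (-(α/2))) :=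
        Finset.sum_le_sum fun i _ => Finset.sum_le_sum fun j _ => key i j
      have step2 : ∑ i : Fin k, ∑ j : Fin k,
            ((if |(i:ℝ) - (j:ℝ)| ≤ s then (1:ℝ) else 0) + max c 1 * K ^ (-(α/2)))
          ≤ K * (2*s + 1) + K * K * (max c 1 * K ^ (-(α/2))) := by
        have inner : ∀ i : Fin k, ∑ j : Fin k,
            ((if |(i:ℝ) - (j:ℝ)| ≤ s then (1:ℝ) else 0) + max c 1 * K ^ (-(α/2)))
            ≤ (2*s + 1) + K * (max c 1 * K ^ (-(α/2))) := by
          intro i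
          rw [Finset.sum_add_distrib, Finset.sum_const, Finset.card_univ, Fintype.card_fin,
            nsmul_eq_mul]
          have hb : ∑ j : Fin k, (if |(i:ℝ) - (j:ℝ)| ≤ s then (1:ℝ) else 0) ≤ 2*s + 1 := by
            rw [Finset.sum_boole]
            exact hcard i
          exact add_le_add hb (le_refl _)
        calc ∑ i : Fin k, ∑ j : Fin k,
              ((if |(i:ℝ) - (j:ℝ)| ≤ s then (1:ℝ) else 0) + max c 1 * K ^ (-(α/2)))
            ≤ ∑ _i : Fin k, ((2*s + 1) + K * (max c 1 * K ^ (-(α/2)))) :=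
              Finset.sum_le_sum fun i _ => inner i
          _ = K * ((2*s + 1) + K * (max c 1 * K ^ (-(α/2)))) := by
              rw [Finset.sum_const, Finset.card_univ, Fintype.card_fin, nsmul_eq_mul]
          _ = K * (2*s + 1) + K * K * (max c 1 * K ^ (-(α/2))) := by ring
      have hKe : (0:ℝ) < K ^ (2 - α/2) := Real.rpow_pos_of_pos hK0 _
      have step3 : K * (2*s + 1) ≤ 3 * K ^ (2 - α/2) := by
        have h32 : K * (2*s+1) ≤ 3 * (K * s) := by nlinarith
        have hKs : K * s = K ^ ((3:ℝ)/2) := by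
          rw [hsdef, Real.sqrt_eq_rpow]
          rw [show ((3:ℝ)/2) = 1 + 1/2 by norm_num, Real.rpow_add hK0, Real.rpow_one]
        have : K ^ ((3:ℝ)/2) ≤ K ^ (2 - α/2) :=
          Real.rpow_le_rpow_of_exponent_le hK1 (by linarith)
        linarith [hKs ▸ h32]
      have step4 : K * K * (max c 1 * K ^ (-(α/2))) = max c 1 * K ^ (2 - α/2) := by
        rw [show (2:ℝ) - α/2 = 1 + 1 + (-(α/2)) by ring, Real.rpow_add hK0,
          Real.rpow_add hK0, Real.rpow_one]
        ring
      calc ∑ i : Fin k, ∑ j : Fin k, (ρ |(i:ℝ) - (j:ℝ)|)^2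
          ≤ K * (2*s + 1) + K * K * (max c 1 * K ^ (-(α/2))) := le_trans step1 step2
        _ ≤ 3 * K ^ (2 - α/2) + max c 1 * K ^ (2 - α/2) := by rw [step4]; linarith
        _ = (max c 1 + 3) * K ^ (2 - α/2) := by ring
  · intro r hr0 hr1
    have hq0 : (0:ℝ) ≤ r^2 := sq_nonneg r
    have hq1 : r^2 < 1 := by nlinarith
    have h1q : (0:ℝ) < 1 - r^2 := by linarith
    refine ⟨2 * (1 - r^2)⁻¹, mul_pos two_pos (inv_pos.mpr h1q), ?_⟩
    intro p k hk
    set q := r^2 with hqdef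
    have hterm : ∀ i j : Fin k, (r ^ |(i:ℝ) - (j:ℝ)|)^2 = q ^ (((i:ℤ) - (j:ℤ)).natAbs) := by
      intro i j
      have habs : |(i:ℝ) - (j:ℝ)| = ((((i:ℤ) - (j:ℤ)).natAbs : ℕ) : ℝ) := by
        rw [Nat.cast_natAbs]
        push_cast
        ring_nf
      rw [habs, Real.rpow_natCast, ← pow_mul, mul_comm, pow_mul]
    have hgeo : ∀ (S : Finset (Fin k)) (f : Fin k → ℕ), Set.InjOn f S →
        ∑ j ∈ S, q ^ f j ≤ (1 - q)⁻¹ := by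
      intro S f hfinj
      calc ∑ j ∈ S, q ^ f j = ∑ n ∈ S.image f, q ^ n :=
            (Finset.sum_image fun a ha b hb h => hfinj ha hb h).symm
        _ ≤ ∑' n : ℕ, q ^ n :=
            (summable_geometric_of_lt_one hq0 hq1).sum_le_tsum _ (fun n _ => pow_nonneg hq0 n)
        _ = (1 - q)⁻¹ := tsum_geometric_of_lt_one hq0 hq1
    have hrow : ∀ i : Fin k, ∑ j : Fin k, q ^ (((i:ℤ) - (j:ℤ)).natAbs) ≤ 2 * (1 - q)⁻¹ := by
      intro i
      rw [← Finset.sum_filter_add_sum_filter_not (univ : Finset (Fin k))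
        (fun j => j.val ≤ i.val) (fun j => q ^ (((i:ℤ) - (j:ℤ)).natAbs))]
      have h1 : ∑ j ∈ (univ : Finset (Fin k)).filter (fun j => j.val ≤ i.val),
          q ^ (((i:ℤ) - (j:ℤ)).natAbs)
          = ∑ j ∈ (univ : Finset (Fin k)).filter (fun j => j.val ≤ i.val),
          q ^ (i.val - j.val) := by
        apply Finset.sum_congr rfl
        intro j hj
        simp only [Finset.mem_filter, Finset.mem_univ, true_and] at hj
        congr 1
        omega
      have h2 : ∑ j ∈ (univ : Finset (Fin k)).filter (fun j => ¬ j.val ≤ i.val),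
          q ^ (((i:ℤ) - (j:ℤ)).natAbs)
          = ∑ j ∈ (univ : Finset (Fin k)).filter (fun j => ¬ j.val ≤ i.val),
          q ^ (j.val - i.val) := by
        apply Finset.sum_congr rfl
        intro j hj
        simp only [Finset.mem_filter, Finset.mem_univ, true_and] at hj
        congr 1
        omega
      rw [h1, h2]
      have g1 : ∑ j ∈ (univ : Finset (Fin k)).filter (fun j => j.val ≤ i.val),
          q ^ (i.val - j.val) ≤ (1 - q)⁻¹ := by
        apply hgeo
        intro a ha b hb h
        simp only [Finset.coe_filter, Set.mem_setOf_eq, Finset.mem_univ, true_and] at ha hb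
        have h' : i.val - a.val = i.val - b.val := h
        exact Fin.ext (by omega)
      have g2 : ∑ j ∈ (univ : Finset (Fin k)).filter (fun j => ¬ j.val ≤ i.val),
          q ^ (j.val - i.val) ≤ (1 - q)⁻¹ := by
        apply hgeo
        intro a ha b hb h
        simp only [Finset.coe_filter, Set.mem_setOf_eq, Finset.mem_univ, true_and] at ha hb
        have h' : a.val - i.val = b.val - i.val := h
        exact Fin.ext (by omega)
      linarith
    calc ∑ i : Fin k, ∑ j : Fin k, (r ^ |(i:ℝ) - (j:ℝ)|)^2
        = ∑ i : Fin k, ∑ j : Fin k, q ^ (((i:ℤ) - (j:ℤ)).natAbs) := by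
          exact Finset.sum_congr rfl fun i _ => Finset.sum_congr rfl fun j _ => hterm i j
      _ ≤ ∑ _i : Fin k, 2 * (1 - q)⁻¹ := Finset.sum_le_sum fun i _ => hrow i
      _ = (k : ℝ) * (2 * (1 - q)⁻¹) := by
          rw [Finset.sum_const, Finset.card_univ, Fintype.card_fin, nsmul_eq_mul]
      _ = 2 * (1 - q)⁻¹ * (k : ℝ) := by ring
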